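/- Let μ ∈ Δ(X×A) be any probability distribution (not necessarily an occupancy measure) and π_μ the induced policy π_μ(a|x) = μ(x,a)/Σ_{a'} μ(x,a'). For any cost vector c, the value function V_c^{π_μ} satisfies ⟨μ, c - T*_γ V_c^{π_μ}⟩ = 0. -/

import Mathlib

open Finset

variable {X A : Type*} [Fintype X] [Fintype A] [DecidableEq X] [DecidableEq A]
  [Nonempty X] [Nonempty A]

/-- A finite discounted Markov decision process. -/
structure FinMDP (X A : Type*) [Fintype X] [Fintype A] where
  P : X → A → X → ℝ
  P_nonneg : ∀ x a x', 0 ≤ P x a x'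
  P_sum : ∀ x a, ∑ x', P x a x' = 1
  ν : X → ℝ
  ν_nonneg : ∀ x, 0 ≤ ν x
  ν_sum : ∑ x, ν x = 1
  γ : ℝ
  γ_pos : 0 < γ
  γ_lt_one : γ < 1

/-- A stationary Markov policy. -/
def FinMDP.IsPolicy (π : X → A → ℝ) : Prop :=
  (∀ x a, 0 ≤ π x a) ∧ ∀ x, ∑ a, π x a = 1

namespace FinMDP

variable (M : FinMDP X A)

/-- The state-action distribution at time `t` of policy `π` started from `ν'`. -/
noncomputable def saDist (ν' : X → ℝ) (π : X → A → ℝ) : ℕ → X × A → ℝ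
  | 0 => fun p => ν' p.1 * π p.1 p.2
  | t + 1 => fun p => (∑ q : X × A, saDist ν' π t q * M.P q.1 q.2 p.1) * π p.1 p.2

/-- The normalized discounted occupancy measure of `π` started from `ν'`. -/
noncomputable def occFrom (ν' : X → ℝ) (π : X → A → ℝ) (p : X × A) : ℝ :=
  (1 - M.γ) * ∑' t : ℕ, M.γ ^ t * M.saDist ν' π t p

/-- The normalized discounted occupancy measure of `π` (from the initial distribution). -/
noncomputable def occ (π : X → A → ℝ) : X × A → ℝ :=
  M.occFrom M.ν π

/-- The (normalized) value function of policy `π` for cost `c`. -/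
noncomputable def value (c : X × A → ℝ) (π : X → A → ℝ) (x : X) : ℝ :=
  ∑ p : X × A, M.occFrom (fun y => if y = x then 1 else 0) π p * c p

/-- The total expected (normalized) discounted cost `ρ_c(π) = ⟨μ_π, c⟩`. -/
noncomputable def cost (c : X × A → ℝ) (π : X → A → ℝ) : ℝ :=
  ∑ p : X × A, M.occ π p * c p

/-- The Bellman flow operator `T_γ μ = (1/(1-γ)) (B - γ P)ᵀ μ`. -/
noncomputable def Tflow (μ : X × A → ℝ) (x' : X) : ℝ :=
  (1 / (1 - M.γ)) * ((∑ a, μ (x', a)) - M.γ * ∑ p : X × A, μ p * M.P p.1 p.2 x')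

/-- The adjoint operator `T*_γ u = (1/(1-γ)) (B - γ P) u`. -/
noncomputable def Tadj (u : X → ℝ) (p : X × A) : ℝ :=
  (1 / (1 - M.γ)) * (u p.1 - M.γ * ∑ x', M.P p.1 p.2 x' * u x')

/-- `π` is an optimal policy for the forward RL problem with cost `c`. -/
def IsOptimal (c : X × A → ℝ) (π : X → A → ℝ) : Prop :=
  IsPolicy π ∧ ∀ π', IsPolicy π' → M.cost c π ≤ M.cost c π'

/-- The optimal value function `V*_c(x) = min_π V_c^π(x)`. -/
noncomputable def Vstar (c : X × A → ℝ) (x : X) : ℝ :=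
  sInf {v | ∃ π, IsPolicy π ∧ v = M.value c π x}

end FinMDP

/-- The policy induced by a state-action distribution:
`π_μ(a|x) = μ(x,a) / ∑_{a'} μ(x,a')` (uniform on zero-mass states). -/
noncomputable def inducedPolicy (μ : X × A → ℝ) (x : X) (a : A) : ℝ :=
  if (∑ a' : A, μ (x, a')) = 0 then (1 : ℝ) / (Fintype.card A)
  else μ (x, a) / ∑ a' : A, μ (x, a')

/-- `μ` is a probability distribution on state-action pairs. -/
def IsDist (μ : X × A → ℝ) : Prop := (∀ p, 0 ≤ μ p) ∧ ∑ p : X × A, μ p = 1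

/-- Membership in the probability simplex `Δ_{[n]}`. -/
def simplexPt {n : ℕ} (w : Fin n → ℝ) : Prop := (∀ i, 0 ≤ w i) ∧ ∑ i, w i = 1

/-- The `ℓ¹` norm of a finitely supported vector. -/
noncomputable def l1 {ι : Type*} [Fintype ι] (f : ι → ℝ) : ℝ := ∑ i, |f i|

/-- The `ℓ∞` norm of a finitely supported vector. -/
noncomputable def linf {ι : Type*} [Fintype ι] [Nonempty ι] (f : ι → ℝ) : ℝ :=
  Finset.univ.sup' Finset.univ_nonempty fun i => |f i|

/-- The cost `c_w = ∑ᵢ wᵢ cᵢ` parameterized by weights `w`. -/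
noncomputable def costW {nc : ℕ} (c : Fin nc → X × A → ℝ) (w : Fin nc → ℝ) :
    X × A → ℝ :=
  fun p => ∑ i, w i * c i p

/-- The objective of the dual LP `(D_{π_E})`. -/
noncomputable def dualObj {nc : ℕ} (M : FinMDP X A) (c : Fin nc → X × A → ℝ)
    (πE : X → A → ℝ) (u : X → ℝ) (w : Fin nc → ℝ) : ℝ :=
  ∑ p : X × A, M.occ πE p * (M.Tadj u p - costW c w p)

/-- Feasibility for the dual LP `(D_{π_E})`. -/
def dualFeasible {nc : ℕ} (M : FinMDP X A) (c : Fin nc → X × A → ℝ)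
    (u : X → ℝ) (w : Fin nc → ℝ) : Prop :=
  simplexPt w ∧ ∀ p, 0 ≤ costW c w p - M.Tadj u p

/-- Optimality for the dual LP `(D_{π_E})`. -/
def dualOptimal {nc : ℕ} (M : FinMDP X A) (c : Fin nc → X × A → ℝ)
    (πE : X → A → ℝ) (u : X → ℝ) (w : Fin nc → ℝ) : Prop :=
  dualFeasible M c u w ∧
    ∀ u' w', dualFeasible M c u' w' → dualObj M c πE u' w' ≤ dualObj M c πE u w

/-- The `C`-distance `δ_C(π, π_E) = max_i (ρ_{c_i}(π) - ρ_{c_i}(π_E))`. -/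
noncomputable def gapMax {nc : ℕ} [NeZero nc] (M : FinMDP X A)
    (c : Fin nc → X × A → ℝ) (πE π : X → A → ℝ) : ℝ :=
  haveI : Nonempty (Fin nc) := ⟨⟨0, Nat.pos_of_ne_zero (NeZero.ne nc)⟩⟩
  Finset.univ.sup' Finset.univ_nonempty fun i => M.cost (c i) π - M.cost (c i) πE

/-- `π_A` is an apprentice policy: it minimizes `δ_C(·, π_E)` over stationary policies. -/
def IsApprentice {nc : ℕ} [NeZero nc] (M : FinMDP X A)
    (c : Fin nc → X × A → ℝ) (πE πA : X → A → ℝ) : Prop :=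
  FinMDP.IsPolicy πA ∧
    ∀ π, FinMDP.IsPolicy π → gapMax M c πE πA ≤ gapMax M c πE π

/-- The parameter set `Λ = {λ : ‖λ‖₂ ≤ β/√n_u}`. -/
def lamSet (nu : ℕ) (β : ℝ) : Set (Fin nu → ℝ) :=
  {l | Real.sqrt (∑ k, l k ^ 2) ≤ β / Real.sqrt nu}

/-- The reduced Lagrangian `L_r(θ, λ, w) = ⟨μ_θ - μ_{π_E}, c_w - T*_γ u_λ⟩`. -/
noncomputable def Lr {nm nu nc : ℕ} (M : FinMDP X A)
    (Φ : Fin nm → X × A → ℝ) (Ψ : Fin nu → X → ℝ) (c : Fin nc → X × A → ℝ)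
    (πE : X → A → ℝ) (θ : Fin nm → ℝ) (lam : Fin nu → ℝ) (w : Fin nc → ℝ) : ℝ :=
  ∑ p : X × A, ((∑ i, θ i * Φ i p) - M.occ πE p) *
    ((∑ j, w j * c j p) - M.Tadj (fun x => ∑ k, lam k * Ψ k x) p)

/-- The saddle-point residual of a point `(θ, λ, w)` for the reduced Lagrangian. -/
noncomputable def epsSad {nm nu nc : ℕ} (M : FinMDP X A)
    (Φ : Fin nm → X × A → ℝ) (Ψ : Fin nu → X → ℝ) (c : Fin nc → X × A → ℝ)
    (πE : X → A → ℝ) (β : ℝ)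
    (θ : Fin nm → ℝ) (lam : Fin nu → ℝ) (w : Fin nc → ℝ) : ℝ :=
  sSup {v | ∃ lam' ∈ lamSet nu β, ∃ w', simplexPt w' ∧ v = Lr M Φ Ψ c πE θ lam' w'} -
    sInf {v | ∃ θ', simplexPt θ' ∧ v = Lr M Φ Ψ c πE θ' lam w}

set_option linter.unusedSectionVars false
section AuxLemmas

variable (M : FinMDP X A)

lemma saDist_nonneg_aux (ν' : X → ℝ) (hν : ∀ x, 0 ≤ ν' x) (π : X → A → ℝ)
    (hπ : ∀ x a, 0 ≤ π x a) : ∀ t p, 0 ≤ M.saDist ν' π t p := by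
  intro t
  induction t with
  | zero => exact fun p => mul_nonneg (hν _) (hπ _ _)
  | succ t ih =>
    exact fun p => mul_nonneg
      (Finset.sum_nonneg fun q _ => mul_nonneg (ih q) (M.P_nonneg _ _ _)) (hπ _ _)

lemma saDist_sum_aux (ν' : X → ℝ) (hν1 : ∑ x, ν' x = 1) (π : X → A → ℝ)
    (hπ1 : ∀ x, ∑ a, π x a = 1) : ∀ t, ∑ p : X × A, M.saDist ν' π t p = 1 := by
  intro t
  induction t with
  | zero =>
    show ∑ p : X × A, ν' p.1 * π p.1 p.2 = 1
    rw [Fintype.sum_prod_type]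
    simp [← Finset.mul_sum, hπ1, hν1]
  | succ t ih =>
    show ∑ p : X × A,
        (∑ q : X × A, M.saDist ν' π t q * M.P q.1 q.2 p.1) * π p.1 p.2 = 1
    rw [Fintype.sum_prod_type]
    have : ∀ y : X, ∑ b : A,
        (∑ q : X × A, M.saDist ν' π t q * M.P q.1 q.2 y) * π y b
        = ∑ q : X × A, M.saDist ν' π t q * M.P q.1 q.2 y := by
      intro y; rw [← Finset.mul_sum, hπ1, mul_one]
    rw [Finset.sum_congr rfl fun y _ => this y, Finset.sum_comm]
    simp only [← Finset.mul_sum, M.P_sum, mul_one, ih]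

lemma saDist_le_one_aux (ν' : X → ℝ) (hν : ∀ x, 0 ≤ ν' x) (hν1 : ∑ x, ν' x = 1)
    (π : X → A → ℝ) (hπ : ∀ x a, 0 ≤ π x a) (hπ1 : ∀ x, ∑ a, π x a = 1)
    (t : ℕ) (p : X × A) : M.saDist ν' π t p ≤ 1 := by
  rw [← saDist_sum_aux M ν' hν1 π hπ1 t]
  exact Finset.single_le_sum (fun q _ => saDist_nonneg_aux M ν' hν π hπ t q)
    (Finset.mem_univ p)

lemma saDist_linear_aux (ν' : X → ℝ) (π : X → A → ℝ) :
    ∀ t p, M.saDist ν' π t p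
      = ∑ x, ν' x * M.saDist (fun y => if y = x then 1 else 0) π t p := by
  intro t
  induction t with
  | zero =>
    intro p
    show ν' p.1 * π p.1 p.2 = ∑ x, ν' x * ((if p.1 = x then 1 else 0) * π p.1 p.2)
    simp [mul_ite, ite_mul, Finset.sum_ite_eq]
  | succ t ih =>
    intro p
    show (∑ q : X × A, M.saDist ν' π t q * M.P q.1 q.2 p.1) * π p.1 p.2
      = ∑ x, ν' x * ((∑ q : X × A,
          M.saDist (fun y => if y = x then 1 else 0) π t q * M.P q.1 q.2 p.1) * π p.1 p.2)
    have : ∑ q : X × A, M.saDist ν' π t q * M.P q.1 q.2 p.1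
        = ∑ x, ν' x * ∑ q : X × A,
            M.saDist (fun y => if y = x then 1 else 0) π t q * M.P q.1 q.2 p.1 := by
      rw [Finset.sum_congr rfl fun q _ => by rw [ih q, Finset.sum_mul], Finset.sum_comm]
      simp [Finset.mul_sum, mul_assoc]
    rw [this, Finset.sum_mul]
    simp [mul_assoc]

lemma saDist_shift_aux (π : X → A → ℝ) (x : X) :
    ∀ t p, M.saDist (fun y => if y = x then 1 else 0) π (t + 1) p
      = M.saDist (fun x' => ∑ a, π x a * M.P x a x') π t p := by
  intro t
  induction t with
  | zero =>
    intro p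
    show (∑ q : X × A, (if q.1 = x then 1 else 0) * π q.1 q.2 * M.P q.1 q.2 p.1) * π p.1 p.2
      = (∑ a, π x a * M.P x a p.1) * π p.1 p.2
    congr 1
    rw [Fintype.sum_prod_type]
    simp [ite_mul, Finset.sum_ite_eq]
  | succ t ih =>
    intro p
    show (∑ q : X × A,
        M.saDist (fun y => if y = x then 1 else 0) π (t + 1) q * M.P q.1 q.2 p.1) * π p.1 p.2
      = (∑ q : X × A,
        M.saDist (fun x' => ∑ a, π x a * M.P x a x') π t q * M.P q.1 q.2 p.1) * π p.1 p.2
    congr 1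
    exact Finset.sum_congr rfl fun q _ => by rw [ih q]

/-- One-step Markov decomposition of `saDist` from a Dirac initial distribution. -/
lemma saDist_markov_aux (π : X → A → ℝ) (x : X) (t : ℕ) (p : X × A) :
    M.saDist (fun y => if y = x then 1 else 0) π (t + 1) p
      = ∑ x', (∑ a, π x a * M.P x a x') *
          M.saDist (fun y => if y = x' then 1 else 0) π t p := by
  rw [saDist_shift_aux M π x t p, saDist_linear_aux M _ π t p]

section Value

variable (c : X × A → ℝ) (π : X → A → ℝ)

/-- The expected cost at time `t` starting from the Dirac at `x`. -/
noncomputable def Jt (t : ℕ) (x : X) : ℝ :=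
  ∑ p : X × A, M.saDist (fun y => if y = x then 1 else 0) π t p * c p

lemma abs_Jt_le (hπ : ∀ x a, 0 ≤ π x a) (hπ1 : ∀ x, ∑ a, π x a = 1) (t : ℕ) (x : X) : |Jt M c π t x| ≤ ∑ p : X × A, |c p| := by
  have hν : ∀ y, 0 ≤ (if y = x then (1:ℝ) else 0) := fun y => by positivity
  have hν1 : ∑ y, (if y = x then (1:ℝ) else 0) = 1 := by simp
  calc |Jt M c π t x| ≤ ∑ p : X × A,
      |M.saDist (fun y => if y = x then 1 else 0) π t p * c p| := Finset.abs_sum_le_sum_abs _ _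
    _ ≤ ∑ p : X × A, |c p| := by
        refine Finset.sum_le_sum fun p _ => ?_
        rw [abs_mul]
        have h0 := saDist_nonneg_aux M _ hν π hπ t p
        have h1 := saDist_le_one_aux M _ hν hν1 π hπ hπ1 t p
        calc |M.saDist (fun y => if y = x then 1 else 0) π t p| * |c p|
            ≤ 1 * |c p| := by
              apply mul_le_mul_of_nonneg_right _ (abs_nonneg _)
              rwa [abs_of_nonneg h0]
          _ = |c p| := one_mul _

lemma summable_Jt (hπ : ∀ x a, 0 ≤ π x a) (hπ1 : ∀ x, ∑ a, π x a = 1) (x : X) : Summable (fun t => M.γ ^ t * Jt M c π t x) := by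
  have hγ0 := M.γ_pos.le
  refine Summable.of_norm_bounded (g := fun t => M.γ ^ t * ∑ p : X × A, |c p|)
    ((summable_geometric_of_lt_one hγ0 M.γ_lt_one).mul_right _) fun t => ?_
  rw [Real.norm_eq_abs, abs_mul, abs_pow, abs_of_nonneg hγ0]
  exact mul_le_mul_of_nonneg_left (abs_Jt_le M c π hπ hπ1 t x) (pow_nonneg hγ0 t)

lemma summable_sa (hπ : ∀ x a, 0 ≤ π x a) (hπ1 : ∀ x, ∑ a, π x a = 1) (x : X) (p : X × A) :
    Summable (fun t => M.γ ^ t * M.saDist (fun y => if y = x then 1 else 0) π t p) := by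
  have hν : ∀ y, 0 ≤ (if y = x then (1:ℝ) else 0) := fun y => by positivity
  have hν1 : ∑ y, (if y = x then (1:ℝ) else 0) = 1 := by simp
  refine Summable.of_nonneg_of_le
    (fun t => mul_nonneg (pow_nonneg M.γ_pos.le _) (saDist_nonneg_aux M _ hν π hπ t p))
    (fun t => ?_) (summable_geometric_of_lt_one M.γ_pos.le M.γ_lt_one)
  calc M.γ ^ t * M.saDist (fun y => if y = x then 1 else 0) π t p
      ≤ M.γ ^ t * 1 := mul_le_mul_of_nonneg_left
        (saDist_le_one_aux M _ hν hν1 π hπ hπ1 t p) (pow_nonneg M.γ_pos.le t)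
    _ = M.γ ^ t := mul_one _

lemma value_eq_tsum (hπ : ∀ x a, 0 ≤ π x a) (hπ1 : ∀ x, ∑ a, π x a = 1) (x : X) :
    M.value c π x = (1 - M.γ) * ∑' t : ℕ, M.γ ^ t * Jt M c π t x := by
  unfold FinMDP.value FinMDP.occFrom Jt
  have h1 : ∀ p : X × A,
      ((1 - M.γ) * ∑' t : ℕ, M.γ ^ t *
        M.saDist (fun y => if y = x then 1 else 0) π t p) * c p
      = (1 - M.γ) * ∑' t : ℕ, M.γ ^ t *
          M.saDist (fun y => if y = x then 1 else 0) π t p * c p := by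
    intro p
    rw [mul_assoc, tsum_mul_right]
  rw [Finset.sum_congr rfl fun p _ => h1 p, ← Finset.mul_sum]
  congr 1
  rw [← Summable.tsum_finsetSum fun p _ => ((summable_sa M π hπ hπ1 x p).mul_right (c p))]
  exact tsum_congr fun t => by rw [Finset.mul_sum]; simp [mul_assoc]

/-- The Bellman equation for the (normalized) value function. -/
lemma bellman_eq (hπ : ∀ x a, 0 ≤ π x a) (hπ1 : ∀ x, ∑ a, π x a = 1) (x : X) :
    M.value c π x = ∑ a, π x a *
      ((1 - M.γ) * c (x, a) + M.γ * ∑ x', M.P x a x' * M.value c π x') := by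
  have hval := value_eq_tsum M c π hπ hπ1
  have hJ0 : Jt M c π 0 x = ∑ a, π x a * c (x, a) := by
    unfold Jt
    show ∑ p : X × A, (if p.1 = x then (1:ℝ) else 0) * π p.1 p.2 * c p = _
    rw [Fintype.sum_prod_type]
    simp [ite_mul, Finset.sum_ite_eq]
  have hJsucc : ∀ t, Jt M c π (t + 1) x
      = ∑ x', (∑ a, π x a * M.P x a x') * Jt M c π t x' := by
    intro t
    unfold Jt
    rw [Finset.sum_congr rfl fun p _ => by
      rw [saDist_markov_aux M π x t p, Finset.sum_mul], Finset.sum_comm]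
    exact Finset.sum_congr rfl fun x' _ => by
      rw [Finset.mul_sum]
      exact Finset.sum_congr rfl fun p _ => mul_assoc _ _ _
  -- split off t = 0
  have hsum := summable_Jt M c π hπ hπ1 x
  have hsplit : ∑' t : ℕ, M.γ ^ t * Jt M c π t x
      = Jt M c π 0 x + ∑' t : ℕ, M.γ ^ (t + 1) * Jt M c π (t + 1) x := by
    rw [Summable.tsum_eq_zero_add hsum]
    simp
  have htail : ∑' t : ℕ, M.γ ^ (t + 1) * Jt M c π (t + 1) x
      = M.γ * ∑ x', (∑ a, π x a * M.P x a x') * ∑' t : ℕ, M.γ ^ t * Jt M c π t x' := by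
    have h2 : ∀ t : ℕ, M.γ ^ (t + 1) * Jt M c π (t + 1) x
        = ∑ x', M.γ * ((∑ a, π x a * M.P x a x') * (M.γ ^ t * Jt M c π t x')) := by
      intro t
      rw [hJsucc t, Finset.mul_sum]
      exact Finset.sum_congr rfl fun x' _ => by ring
    rw [tsum_congr h2, Summable.tsum_finsetSum fun x' _ => ((summable_Jt M c π hπ hπ1 x').mul_left _).mul_left _]
    rw [Finset.mul_sum]
    exact Finset.sum_congr rfl fun x' _ => by
      rw [tsum_mul_left, tsum_mul_left]
  rw [hval x, hsplit, htail, hJ0]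
  have hrhs : ∀ a, π x a * ((1 - M.γ) * c (x, a) + M.γ * ∑ x', M.P x a x' * M.value c π x')
      = (1 - M.γ) * (π x a * c (x, a))
        + M.γ * ∑ x', π x a * M.P x a x' * ((1 - M.γ) * ∑' t : ℕ, M.γ ^ t * Jt M c π t x') := by
    intro a
    have h3 : ∑ x', π x a * M.P x a x' * ((1 - M.γ) * ∑' t : ℕ, M.γ ^ t * Jt M c π t x')
        = π x a * ∑ x', M.P x a x' * M.value c π x' := by
      rw [Finset.mul_sum]
      exact Finset.sum_congr rfl fun x' _ => by rw [hval x']; ring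
    rw [h3]; ring
  rw [Finset.sum_congr rfl fun a _ => hrhs a, Finset.sum_add_distrib, ← Finset.mul_sum,
    ← Finset.mul_sum]
  have hswap : ∑ a, ∑ x', π x a * M.P x a x' * ((1 - M.γ) * ∑' t : ℕ, M.γ ^ t * Jt M c π t x')
      = ∑ x', (∑ a, π x a * M.P x a x') * ((1 - M.γ) * ∑' t : ℕ, M.γ ^ t * Jt M c π t x') := by
    rw [Finset.sum_comm]
    exact Finset.sum_congr rfl fun x' _ => by rw [Finset.sum_mul]
  rw [hswap]
  have hdistr : ∑ x', (∑ a, π x a * M.P x a x') *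
        ((1 - M.γ) * ∑' t : ℕ, M.γ ^ t * Jt M c π t x')
      = (1 - M.γ) * ∑ x', (∑ a, π x a * M.P x a x') * ∑' t : ℕ, M.γ ^ t * Jt M c π t x' := by
    rw [Finset.mul_sum]
    exact Finset.sum_congr rfl fun x' _ => by ring
  rw [hdistr]; ring

end Value

end AuxLemmas

lemma inducedPolicy_isPolicy (μ : X × A → ℝ) (hμ : IsDist μ) :
    FinMDP.IsPolicy (inducedPolicy μ) := by
  constructor
  · intro x a
    unfold inducedPolicy
    split
    · positivity
    · exact div_nonneg (hμ.1 _) (Finset.sum_nonneg fun a' _ => hμ.1 _)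
  · intro x
    unfold inducedPolicy
    by_cases h : (∑ a' : A, μ (x, a')) = 0
    · simp only [h, if_true]
      rw [Finset.sum_const, Finset.card_univ, nsmul_eq_mul]
      have : (Fintype.card A : ℝ) ≠ 0 := Nat.cast_ne_zero.mpr Fintype.card_ne_zero
      field_simp
    · simp only [h, if_false]
      rw [← Finset.sum_div, div_self h]

lemma mu_decomp (μ : X × A → ℝ) (hμ : IsDist μ) (x : X) (a : A) :
    μ (x, a) = (∑ a' : A, μ (x, a')) * inducedPolicy μ x a := by
  unfold inducedPolicy
  by_cases h : (∑ a' : A, μ (x, a')) = 0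
  · simp only [h, if_true, zero_mul]
    have := (Finset.sum_eq_zero_iff_of_nonneg (fun a' _ => hμ.1 (x, a'))).mp h
    exact this a (Finset.mem_univ a)
  · simp only [h, if_false]
    rw [mul_div_cancel₀ _ h]

/-- For any distribution `μ ∈ Δ(X×A)` (not necessarily an occupancy
measure) and any cost `c`, the value function of the induced policy `π_μ` satisfies
`⟨μ, c - T*_γ V_c^{π_μ}⟩ = 0`. -/
theorem induced_policy_advantage_orthogonality (M : FinMDP X A)
    (μ : X × A → ℝ) (hμ : IsDist μ) (c : X × A → ℝ) :
    ∑ p : X × A, μ p * (c p - M.Tadj (M.value c (inducedPolicy μ)) p) = 0 := by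
  obtain ⟨hπ, hπ1⟩ := inducedPolicy_isPolicy μ hμ
  set π := inducedPolicy μ with hπdef
  set V := M.value c π with hV
  have hγ : (1 : ℝ) - M.γ ≠ 0 := by
    have := M.γ_lt_one; linarith
  have hbell := bellman_eq M c π hπ hπ1
  rw [Fintype.sum_prod_type]
  apply Finset.sum_eq_zero
  intro x _
  have key : ∀ a, μ (x, a) * (c (x, a) - M.Tadj V (x, a))
      = (∑ a' : A, μ (x, a')) *
        (π x a * (c (x, a) - M.Tadj V (x, a))) := by
    intro a
    rw [mu_decomp μ hμ x a]
    ring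
  rw [Finset.sum_congr rfl fun a _ => key a, ← Finset.mul_sum]
  have hzero : ∑ a, π x a * (c (x, a) - M.Tadj V (x, a)) = 0 := by
    unfold FinMDP.Tadj
    have expand : ∀ a, π x a * (c (x, a)
        - 1 / (1 - M.γ) * (V x - M.γ * ∑ x', M.P x a x' * V x'))
        = (1 / (1 - M.γ)) * (π x a * ((1 - M.γ) * c (x, a)
            + M.γ * ∑ x', M.P x a x' * V x') - π x a * V x) := by
      intro a
      field_simp
      ring
    rw [Finset.sum_congr rfl fun a _ => expand a, ← Finset.mul_sum,
      Finset.sum_sub_distrib, ← hbell x, ← Finset.sum_mul, hπ1, one_mul,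
      sub_self, mul_zero]
  rw [hzero, mul_zero]
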